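/- Let G be a finite simple graph, let L be the set of vertices of G of degree at most 1, and suppose L is an independent set of G. Let N[L] = L ∪ N(L) be the closed neighborhood of L. Then α(G) = |L| + α(G[V ∖ N[L]]), where G[V ∖ N[L]] is the induced subgraph on the vertices outside N[L] and α denotes the maximum cardinality of an independent set. -/

import Mathlib

/-- `α(G)`: the largest cardinality of an independent set (a set of pairwise
non-adjacent vertices) of the simple graph `G`. -/
noncomputable def alphaSG {W : Type*} (G : SimpleGraph W) : ℕ :=
  sSup {m : ℕ | ∃ s : Set W, s.Pairwise (fun u v => ¬ G.Adj u v) ∧ s.ncard = m}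

lemma alphaSG_bddAbove {W : Type*} [Finite W] (G : SimpleGraph W) :
    BddAbove {m : ℕ | ∃ s : Set W, s.Pairwise (fun u v => ¬ G.Adj u v) ∧ s.ncard = m} := by
  refine ⟨Nat.card W, fun m hm => ?_⟩
  obtain ⟨s, _, rfl⟩ := hm
  simpa [Set.ncard_univ] using Set.ncard_le_ncard (Set.subset_univ s) (Set.toFinite _)

lemma le_alphaSG {W : Type*} [Finite W] (G : SimpleGraph W) (s : Set W)
    (h : s.Pairwise (fun u v => ¬ G.Adj u v)) : s.ncard ≤ alphaSG G :=
  le_csSup (alphaSG_bddAbove G) ⟨s, h, rfl⟩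

lemma alphaSG_exists {W : Type*} [Finite W] (G : SimpleGraph W) :
    ∃ s : Set W, s.Pairwise (fun u v => ¬ G.Adj u v) ∧ s.ncard = alphaSG G := by
  have hne : {m : ℕ | ∃ s : Set W, s.Pairwise (fun u v => ¬ G.Adj u v) ∧ s.ncard = m}.Nonempty :=
    ⟨0, ∅, by simp, by simp⟩
  exact Nat.sSup_mem hne (alphaSG_bddAbove G)

theorem stmt_15 {V : Type*} [Fintype V] (G : SimpleGraph V)
    (L : Set V) (hL : L = {v : V | {w : V | G.Adj v w}.ncard ≤ 1})
    (hLind : L.Pairwise (fun u v => ¬ G.Adj u v))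
    (NL : Set V) (hNL : NL = L ∪ {v : V | ∃ u ∈ L, G.Adj u v}) :
    alphaSG G = L.ncard + alphaSG (G.induce NLᶜ) := by
  set NL' : Set V := {v : V | ∃ u ∈ L, G.Adj u v} with hNL'
  -- degree fact
  have hdeg : ∀ u ∈ L, ∀ w w', G.Adj u w → G.Adj u w' → w = w' := by
    intro u hu w w' hw hw'
    have h1 : {w : V | G.Adj u w}.ncard ≤ 1 := by rw [hL] at hu; exact hu
    exact (Set.ncard_le_one (Set.toFinite _)).mp h1 w hw w' hw'
  -- L and N(L) are disjoint
  have hLdisj : Disjoint L NL' := by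
    rw [Set.disjoint_left]
    rintro v hv ⟨u, hu, huv⟩
    rcases eq_or_ne u v with rfl | hne
    · exact G.irrefl huv
    · exact hLind hu hv hne huv
  have hLsub : L ⊆ NL := by rw [hNL]; exact Set.subset_union_left
  refine le_antisymm ?_ ?_
  · -- α(G) ≤ |L| + α'
    obtain ⟨S, hS, hSc⟩ := alphaSG_exists G
    rw [← hSc]
    -- injection from S ∩ NL' to L \ S
    classical
    set f : V → V := fun w => if h : ∃ u ∈ L, G.Adj u w then h.choose else w with hf
    have hfspec : ∀ w ∈ S ∩ NL', f w ∈ L ∧ G.Adj (f w) w := by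
      rintro w ⟨-, hw⟩
      have hfw : f w = hw.choose := dif_pos hw
      rw [hfw]
      exact ⟨hw.choose_spec.1, hw.choose_spec.2⟩
    have hmaps : ∀ w ∈ S ∩ NL', f w ∈ L \ S := by
      intro w hw
      obtain ⟨h1, h2⟩ := hfspec w hw
      refine ⟨h1, fun hfS => ?_⟩
      exact hS hfS hw.1 (G.ne_of_adj h2) h2
    have hinj : Set.InjOn f (S ∩ NL') := by
      intro w hw w' hw' heq
      obtain ⟨h1, h2⟩ := hfspec w hw
      obtain ⟨h1', h2'⟩ := hfspec w' hw'
      exact hdeg (f w) h1 w w' h2 (heq ▸ h2')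
    have hcount : (S ∩ NL').ncard ≤ (L \ S).ncard :=
      Set.ncard_le_ncard_of_injOn f hmaps hinj (Set.toFinite _)
    -- S \ NL gives an independent set in the induced graph
    have hsub : (S \ NL).ncard ≤ alphaSG (G.induce NLᶜ) := by
      set t : Set ↥NLᶜ := {x : ↥NLᶜ | (x : V) ∈ S} with ht
      have htind : t.Pairwise (fun u v => ¬ (G.induce NLᶜ).Adj u v) := by
        intro x hx y hy hxy hadj
        exact hS hx hy (fun h => hxy (Subtype.ext h)) hadj
      have himg : Subtype.val '' t = S \ NL := by
        ext v
        simp only [Set.mem_image, Set.mem_diff]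
        constructor
        · rintro ⟨⟨x, hx⟩, hxS, rfl⟩
          exact ⟨hxS, hx⟩
        · rintro ⟨hvS, hvNL⟩
          exact ⟨⟨v, hvNL⟩, hvS, rfl⟩
      have : t.ncard = (S \ NL).ncard := by
        rw [← himg, Set.ncard_image_of_injective _ Subtype.val_injective]
      rw [← this]
      exact le_alphaSG _ t htind
    -- counting
    have e1 : (S ∩ NL).ncard + (S \ NL).ncard = S.ncard :=
      Set.ncard_inter_add_ncard_diff_eq_ncard S NL (Set.toFinite _)
    have e2 : S ∩ NL = (S ∩ L) ∪ (S ∩ NL') := by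
      rw [hNL, Set.inter_union_distrib_left]
    have e3 : (S ∩ NL).ncard = (S ∩ L).ncard + (S ∩ NL').ncard := by
      rw [e2]
      exact Set.ncard_union_eq (hLdisj.mono Set.inter_subset_right Set.inter_subset_right)
        (Set.toFinite _) (Set.toFinite _)
    have e4 : (L ∩ S).ncard + (L \ S).ncard = L.ncard :=
      Set.ncard_inter_add_ncard_diff_eq_ncard L S (Set.toFinite _)
    rw [Set.inter_comm S L] at e3
    omega
  · -- |L| + α' ≤ α(G)
    obtain ⟨t, ht, htc⟩ := alphaSG_exists (G.induce NLᶜ)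
    rw [← htc]
    set s : Set V := L ∪ (Subtype.val '' t) with hs
    have hNLc : ∀ v : V, v ∈ (NLᶜ : Set V) → ∀ u ∈ L, ¬ G.Adj u v := by
      intro v hv u hu hadj
      exact hv (hNL ▸ Set.mem_union_right _ ⟨u, hu, hadj⟩)
    have hsind : s.Pairwise (fun u v => ¬ G.Adj u v) := by
      rintro x (hxL | ⟨x', hx', rfl⟩) y (hyL | ⟨y', hy', rfl⟩) hne
      · exact hLind hxL hyL hne
      · exact fun h => hNLc _ y'.2 x hxL h
      · exact fun h => hNLc _ x'.2 y hyL (G.adj_symm h)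
      · intro h
        exact ht hx' hy' (fun hh => hne (congrArg Subtype.val hh)) h
    have hdisj : Disjoint L (Subtype.val '' t) := by
      rw [Set.disjoint_left]
      rintro v hv ⟨x, hx, rfl⟩
      exact x.2 (hLsub hv)
    have : s.ncard = L.ncard + t.ncard := by
      rw [hs, Set.ncard_union_eq hdisj (Set.toFinite _) (Set.toFinite _),
        Set.ncard_image_of_injective _ Subtype.val_injective]
    rw [← this]
    exact le_alphaSG G s hsind
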